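/- arXiv:2506.03565 — 4 statements merged into one kernel-verified Lean document; each statement's English description precedes it below -/
import Mathlib

section
/- Let T > 0 (possibly T = ∞), τ ∈ (0,T), A > 0, α > 0 and B > 0 be real numbers. Suppose z : [0,T) → [0,∞) is continuous on [0,T), differentiable on (0,T), and satisfies z'(t) + A·z(t)^α ≤ h(t) for all t ∈ (0,T), where h : (0,T) → [0,∞) is locally integrable and satisfies ∫_t^{t+τ} h(s) ds ≤ B for all t ∈ (0, T−τ). Then z(t) ≤ max{ z(0) + B , (1/τ^{1/α})·(B/A)^{1/α} + 2B } for all t ∈ (0,T). -/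
open MeasureTheory Set

/-- Quantitative boundedness criterion (Lemma 2.3): if `z ≥ 0` is continuous on `[0,T)`,
differentiable on `(0,T)` and satisfies `z' + A z^α ≤ h` on `(0,T)`, where `h ≥ 0` is locally
integrable on `(0,T)` with `∫_t^{t+τ} h ≤ B` for all `t ∈ (0, T-τ)`, then
`z(t) ≤ max { z(0) + B , τ^{-1/α} (B/A)^{1/α} + 2B }` for all `t ∈ (0,T)`.
Here `T ∈ (0,∞]` is modelled as an extended real number. -/
theorem stmt_2 (T : EReal) (τ A α B : ℝ) (hT : 0 < T)
    (hτ : 0 < τ) (hτT : (τ : EReal) < T) (hA : 0 < A) (hα : 0 < α) (hB : 0 < B)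
    (z h : ℝ → ℝ)
    (hz0 : ∀ t : ℝ, 0 ≤ t → (t : EReal) < T → 0 ≤ z t)
    (hzc : ContinuousOn z {t : ℝ | 0 ≤ t ∧ (t : EReal) < T})
    (hzd : ∀ t : ℝ, 0 < t → (t : EReal) < T → DifferentiableAt ℝ z t)
    (hh0 : ∀ t : ℝ, 0 < t → (t : EReal) < T → 0 ≤ h t)
    (hhloc : LocallyIntegrableOn h {t : ℝ | 0 < t ∧ (t : EReal) < T})
    (hode : ∀ t : ℝ, 0 < t → (t : EReal) < T → deriv z t + A * z t ^ α ≤ h t)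
    (hhB : ∀ t : ℝ, 0 < t → ((t + τ : ℝ) : EReal) < T → ∫ s in t..t + τ, h s ≤ B) :
    ∀ t : ℝ, 0 < t → (t : EReal) < T →
      z t ≤ max (z 0 + B) ((1 / τ ^ (1 / α)) * (B / A) ^ (1 / α) + 2 * B) := by
  have coe_mono : ∀ {a b : ℝ}, a ≤ b → (b : EReal) < T → (a : EReal) < T := by
    intro a b hab hbT
    exact lt_of_le_of_lt (EReal.coe_le_coe_iff.2 hab) hbT
  set M : ℝ := max (z 0 + B) ((1 / τ ^ (1 / α)) * (B / A) ^ (1 / α) + 2 * B) with hM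
  set K : ℝ := (B / (A * τ)) ^ (1 / α) with hKdef
  have hK0 : 0 ≤ K := Real.rpow_nonneg (by positivity) _
  have hKeq : (1 / τ ^ (1 / α)) * (B / A) ^ (1 / α) = K := by
    rw [hKdef]
    have : B / (A * τ) = (B / A) / τ := by rw [div_div]
    rw [this, Real.div_rpow (by positivity) hτ.le]
    ring
  have hKM : K + 2 * B ≤ M := by
    rw [hM, ← hKeq]
    exact le_max_right _ _
  have hKα : K ^ α = B / (A * τ) := by
    rw [hKdef, ← Real.rpow_mul (by positivity), one_div_mul_cancel hα.ne', Real.rpow_one]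
  -- integrability facts
  have hint : ∀ s u : ℝ, 0 < s → (u : EReal) < T → IntegrableOn h (Icc s u) := by
    intro s u hs huT
    apply hhloc.integrableOn_compact_subset _ isCompact_Icc
    intro x hx
    exact ⟨lt_of_lt_of_le hs hx.1, coe_mono hx.2 huT⟩
  have hzcont : ∀ s u : ℝ, 0 < s → (u : EReal) < T → ContinuousOn z (Icc s u) := by
    intro s u hs huT
    apply hzc.mono
    intro x hx
    exact ⟨le_of_lt (lt_of_lt_of_le hs hx.1), coe_mono hx.2 huT⟩
  have hzα_int : ∀ s u : ℝ, 0 < s → (u : EReal) < T →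
      IntegrableOn (fun x => z x ^ α) (Icc s u) := by
    intro s u hs huT
    exact ((hzcont s u hs huT).rpow_const (fun x hx => Or.inr hα.le)).integrableOn_Icc
  have toII : ∀ (f : ℝ → ℝ) (s u : ℝ), s ≤ u → IntegrableOn f (Icc s u) →
      IntervalIntegrable f volume s u := by
    intro f s u hsu hf
    rw [← uIcc_of_le hsu] at hf
    exact hf.intervalIntegrable
  -- key comparison lemma
  have key : ∀ (φ : ℝ → ℝ) (s u : ℝ), 0 < s → s ≤ u → (u : EReal) < T →
      IntegrableOn φ (Icc s u) → (∀ x ∈ Ioo s u, deriv z x ≤ φ x) →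
      z u - z s ≤ ∫ y in s..u, φ y := by
    intro φ s u hs hsu huT hφ hd
    refine intervalIntegral.sub_le_integral_of_hasDeriv_right_of_le hsu (hzcont s u hs huT)
      (fun x hx => ?_) hφ hd
    exact ((hzd x (hs.trans hx.1) (coe_mono hx.2.le huT)).hasDerivAt).hasDerivWithinAt
  -- window bound for the integral of h
  have hw : ∀ s u : ℝ, 0 < s → s ≤ u → u - s ≤ τ → (u : EReal) < T →
      (∫ y in s..u, h y) ≤ B := by
    intro s u hs hsu husτ huT
    obtain ⟨c, hc1, hc2⟩ : ∃ c : ℝ, max 0 (u - τ) < c ∧ ((c + τ : ℝ) : EReal) < T := by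
      by_cases hTt : T = ⊤
      · exact ⟨max 0 (u - τ) + 1, lt_add_one _, by rw [hTt]; exact EReal.coe_lt_top _⟩
      · have hTb : T ≠ ⊥ := ne_bot_of_gt hT
        have hrT : ((T.toReal : ℝ) : EReal) = T := EReal.coe_toReal hTt hTb
        set r := T.toReal
        have hur : u < r := by rw [← hrT] at huT; exact_mod_cast huT
        have hτr : τ < r := by rw [← hrT] at hτT; exact_mod_cast hτT
        have hmax : max 0 (u - τ) < r - τ := max_lt (by linarith) (by linarith)
        refine ⟨(max 0 (u - τ) + (r - τ)) / 2, by linarith, ?_⟩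
        rw [← hrT]
        exact_mod_cast (by linarith : (max 0 (u - τ) + (r - τ)) / 2 + τ < r)
    have hδ0 : 0 < min s c := lt_min hs (lt_of_le_of_lt (le_max_left 0 _) hc1)
    have hδs : min s c ≤ s := min_le_left _ _
    have hδu : u ≤ min s c + τ := by
      have h2 : u - τ ≤ c := le_of_lt (lt_of_le_of_lt (le_max_right 0 _) hc1)
      have h3 : u - τ ≤ min s c := le_min (by linarith) h2
      linarith
    have hδT : ((min s c + τ : ℝ) : EReal) < T :=
      coe_mono (add_le_add_left (min_le_right s c) τ) hc2
    have hii : IntervalIntegrable h volume (min s c) (min s c + τ) :=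
      toII h _ _ (by linarith) (hint _ _ hδ0 hδT)
    have hae : (0 : ℝ → ℝ) ≤ᵐ[volume.restrict (Ioc (min s c) (min s c + τ))] h := by
      refine (ae_restrict_iff' measurableSet_Ioc).2 (ae_of_all _ fun x hx => ?_)
      exact hh0 x (hδ0.trans hx.1) (coe_mono hx.2 hδT)
    calc (∫ y in s..u, h y) ≤ ∫ y in (min s c)..(min s c + τ), h y :=
          intervalIntegral.integral_mono_interval hδs hsu hδu hae hii
      _ ≤ B := hhB _ hδ0 hδT
  -- one-step growth bound
  have hstep : ∀ s u : ℝ, 0 < s → s ≤ u → (u : EReal) < T →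
      z u ≤ z s + ∫ y in s..u, h y := by
    intro s u hs hsu huT
    have hd : ∀ x ∈ Ioo s u, deriv z x ≤ h x := by
      intro x hx
      have hx0 : 0 < x := hs.trans hx.1
      have hxT : (x : EReal) < T := coe_mono hx.2.le huT
      have h1 := hode x hx0 hxT
      have h2 : 0 ≤ A * z x ^ α :=
        mul_nonneg hA.le (Real.rpow_nonneg (hz0 x hx0.le hxT) α)
      linarith
    have := key h s u hs hsu huT (hint s u hs huT) hd
    linarith
  -- decay when z stays above K on a whole window
  have hdecay : ∀ u : ℝ, τ < u → (u : EReal) < T →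
      (∀ s ∈ Icc (u - τ) u, K < z s) → z u ≤ z (u - τ) := by
    intro u hτu huT hKz
    have hs0 : 0 < u - τ := by linarith
    have hsu : u - τ ≤ u := by linarith
    have hih : IntegrableOn h (Icc (u - τ) u) := hint _ _ hs0 huT
    have hiz : IntegrableOn (fun x => z x ^ α) (Icc (u - τ) u) := hzα_int _ _ hs0 huT
    have hiφ : IntegrableOn (fun x => h x - A * z x ^ α) (Icc (u - τ) u) :=
      hih.sub (hiz.const_mul A)
    have hd : ∀ x ∈ Ioo (u - τ) u, deriv z x ≤ h x - A * z x ^ α := by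
      intro x hx
      have := hode x (hs0.trans hx.1) (coe_mono hx.2.le huT)
      linarith
    have h1 := key _ (u - τ) u hs0 hsu huT hiφ hd
    have hsplit : (∫ y in (u - τ)..u, (h y - A * z y ^ α)) =
        (∫ y in (u - τ)..u, h y) - A * ∫ y in (u - τ)..u, z y ^ α := by
      rw [intervalIntegral.integral_sub (toII h _ _ hsu hih)
        ((toII _ _ _ hsu hiz).const_mul A), intervalIntegral.integral_const_mul]
    have h2 : (∫ y in (u - τ)..u, h y) ≤ B := hw _ _ hs0 hsu (by linarith) huT
    have h3 : τ * K ^ α ≤ ∫ y in (u - τ)..u, z y ^ α := by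
      have hmono : (∫ y in (u - τ)..u, K ^ α) ≤ ∫ y in (u - τ)..u, z y ^ α := by
        refine intervalIntegral.integral_mono_on hsu intervalIntegrable_const
          (toII _ _ _ hsu hiz) (fun x hx => ?_)
        exact Real.rpow_le_rpow hK0 (hKz x hx).le hα.le
      rw [intervalIntegral.integral_const, smul_eq_mul] at hmono
      have : (u - (u - τ)) * K ^ α = τ * K ^ α := by ring_nf
      linarith [hmono, this.symm.le, this.le]
    have h4 : A * (τ * (B / (A * τ))) = B := by
      field_simp
    rw [hsplit] at h1
    have h5 : A * (τ * K ^ α) ≤ A * ∫ y in (u - τ)..u, z y ^ α :=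
      mul_le_mul_of_nonneg_left h3 hA.le
    rw [hKα] at h5
    linarith
  -- base case : t ≤ τ
  have hbase : ∀ u : ℝ, 0 < u → u ≤ τ → (u : EReal) < T → z u ≤ z 0 + B := by
    intro u hu huτ huT
    have hzs : ∀ s ∈ Ioo (0 : ℝ) u, z u - B ≤ z s := by
      intro s hs
      have h1 := hstep s u hs.1 hs.2.le huT
      have h2 := hw s u hs.1 hs.2.le (by linarith [hs.1]) huT
      linarith
    have h0S : (0 : ℝ) ∈ {t : ℝ | 0 ≤ t ∧ (t : EReal) < T} :=
      ⟨le_refl 0, by exact_mod_cast hT⟩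
    have hcw : ContinuousWithinAt z {t : ℝ | 0 ≤ t ∧ (t : EReal) < T} 0 := hzc 0 h0S
    have hsub : Ioo (0 : ℝ) u ⊆ {t : ℝ | 0 ≤ t ∧ (t : EReal) < T} :=
      fun x hx => ⟨hx.1.le, coe_mono hx.2.le huT⟩
    have htd : Filter.Tendsto z (nhdsWithin 0 (Ioo 0 u)) (nhds (z 0)) :=
      hcw.mono_left (nhdsWithin_mono _ hsub)
    have hne : (nhdsWithin (0 : ℝ) (Ioo 0 u)).NeBot := by
      rw [← mem_closure_iff_nhdsWithin_neBot, closure_Ioo hu.ne]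
      exact ⟨le_refl 0, hu.le⟩
    have := ge_of_tendsto htd (eventually_mem_nhdsWithin.mono fun x hx => hzs x hx)
    linarith
  -- main induction
  have main : ∀ n : ℕ, ∀ u : ℝ, 0 < u → u ≤ ((n : ℝ) + 1) * τ → (u : EReal) < T →
      z u ≤ M := by
    intro n
    induction n with
    | zero =>
      intro u hu huτ huT
      have huτ' : u ≤ τ := by simpa using huτ
      have := hbase u hu huτ' huT
      exact this.trans (le_max_left _ _)
    | succ n ih =>
      intro u hu huτ huT
      by_cases hcase : u ≤ τ
      · exact (hbase u hu hcase huT).trans (le_max_left _ _)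
      · push_neg at hcase
        by_cases hex : ∃ s ∈ Icc (u - τ) u, z s ≤ K
        · obtain ⟨s, hsmem, hsK⟩ := hex
          have hs0 : 0 < s := lt_of_lt_of_le (by linarith) hsmem.1
          have h1 := hstep s u hs0 hsmem.2 huT
          have h2 := hw s u hs0 hsmem.2 (by linarith [hsmem.1]) huT
          have : z u ≤ K + 2 * B := by linarith
          exact this.trans hKM
        · push_neg at hex
          have h1 := hdecay u hcase huT (fun s hs => hex s hs)
          have h2 : z (u - τ) ≤ M := by
            refine ih (u - τ) (by linarith) ?_ (coe_mono (by linarith) huT)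
            push_cast at huτ ⊢
            linarith
          linarith
  intro t ht htT
  obtain ⟨n, hn⟩ := exists_nat_ge (t / τ)
  have htn : t ≤ ((n : ℝ) + 1) * τ := by
    have := (div_le_iff₀ hτ).1 hn
    nlinarith
  exact main n t ht htn htT
end

section
/- Let (X, 𝔪) be a measure space with 𝔪(X) < ∞, let T ∈ (0,∞], and let r₁ ≥ 2, r₂ ≥ 2, μ₁ > 0, μ₂ > 0, r > 0 be real numbers. Suppose u, v, w : [0,T) → (X → ℝ) are families of nonnegative measurable functions such that for every t the functions u(t), v(t), w(t), u(t)^{r₁}, v(t)^{r₂} and u(t)·v(t) are integrable, the mass functions U(t) = ∫_X u(t) d𝔪, V(t) = ∫_X v(t) d𝔪 and W(t) = ∫_X w(t) d𝔪 are continuous on [0,T) and differentiable on (0,T), and satisfy for all t ∈ (0,T): U'(t) = W(t) − μ₁ ∫_X u(t)^{r₁} d𝔪, V'(t) = W(t) + r ∫_X u(t)·v(t) d𝔪 − μ₂ ∫_X v(t)^{r₂} d𝔪, and W'(t) = U(t) + V(t) − W(t). Then there exists a constant C > 0 such that U(t) + V(t) + W(t) ≤ C for all t ∈ [0,T). -/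
open MeasureTheory

private lemma aux_self_le {s p : ℝ} (hs : 0 ≤ s) (hp : 1 ≤ p) : s ≤ s ^ p + 1 := by
  rcases le_total s 1 with h | h
  · have h0 : (0:ℝ) ≤ s ^ p := Real.rpow_nonneg hs p
    linarith
  · have h1 : s ^ (1:ℝ) ≤ s ^ p := Real.rpow_le_rpow_of_exponent_le h hp
    rw [Real.rpow_one] at h1
    linarith

private lemma aux_sq_le {s p : ℝ} (hs : 0 ≤ s) (hp : 2 ≤ p) : s * s ≤ s ^ p + 1 := by
  rcases le_total s 1 with h | h
  · have h0 : (0:ℝ) ≤ s ^ p := Real.rpow_nonneg hs p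
    nlinarith
  · have h1 : s ^ (2:ℝ) ≤ s ^ p := Real.rpow_le_rpow_of_exponent_le h hp
    have h2 : s ^ (2:ℝ) = s * s := by
      rw [show (2:ℝ) = ((2:ℕ):ℝ) by norm_num, Real.rpow_natCast]; ring
    rw [h2] at h1
    linarith

private lemma aux_lin {s M p : ℝ} (hs : 0 ≤ s) (hM : 1 ≤ M) (hp : 2 ≤ p) :
    M * s - M ^ 2 ≤ s ^ p := by
  rcases le_total s M with h | h
  · have h0 : (0:ℝ) ≤ s ^ p := Real.rpow_nonneg hs p
    nlinarith
  · have hs1 : 1 ≤ s := hM.trans h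
    have hsne : s ≠ 0 := by linarith
    have e : s ^ p = s ^ (p - 1) * s := by
      rw [← Real.rpow_add_one hsne (p - 1)]; ring_nf
    have h1 : M ^ (p - 1) ≤ s ^ (p - 1) := Real.rpow_le_rpow (by linarith) h (by linarith)
    have h2 : M ^ (1:ℝ) ≤ M ^ (p - 1) := Real.rpow_le_rpow_of_exponent_le hM (by linarith)
    rw [Real.rpow_one] at h2
    nlinarith [mul_le_mul_of_nonneg_right (h2.trans h1) hs]

private lemma aux_young {u v p q η : ℝ} (hu : 0 ≤ u) (hv : 0 ≤ v) (hp : 2 ≤ p) (hq : 2 ≤ q)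
    (hη : 0 < η) : u * v ≤ η * v ^ q + (1 + 1/η) * (u ^ p + 1) := by
  have hηinv : (0:ℝ) < 1/η := by positivity
  have hup : (0:ℝ) ≤ u ^ p := Real.rpow_nonneg hu p
  have hvq : (0:ℝ) ≤ v ^ q := Real.rpow_nonneg hv q
  rcases le_total v 1 with hv1 | hv1
  · have h1 : u * v ≤ u := by nlinarith
    have h2 := aux_self_le hu (by linarith : (1:ℝ) ≤ p)
    nlinarith
  · have hvne : v ≠ 0 := by linarith
    have e : v ^ q = v ^ (q - 1) * v := by
      rw [← Real.rpow_add_one hvne (q - 1)]; ring_nf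
    rcases le_total u (η * v ^ (q - 1)) with hc | hc
    · have h1 : u * v ≤ η * v ^ (q - 1) * v := mul_le_mul_of_nonneg_right hc hv
      nlinarith
    · have h1 : v ^ (1:ℝ) ≤ v ^ (q - 1) := Real.rpow_le_rpow_of_exponent_le hv1 (by linarith)
      rw [Real.rpow_one] at h1
      have h2 : η * v ≤ u := le_trans (by nlinarith) hc
      have h3 : u * v * η ≤ u * u := by nlinarith
      have h4 := aux_sq_le hu hp
      have h5 : u * v ≤ (u ^ p + 1) / η := by
        rw [le_div_iff₀ hη]; nlinarith
      have h6 : (u ^ p + 1) / η = (1/η) * (u ^ p + 1) := by ring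
      nlinarith

set_option maxHeartbeats 1600000 in
/-- Uniform-in-time L¹ bound (Lemma 3.2) on an abstract finite measure space: if the masses
`U, V, W` of the nonnegative families `u, v, w` satisfy the ODE system obtained by integrating
the Alopecia Areata chemotaxis system with Neumann boundary conditions, then `U + V + W` is
bounded on `[0,T)`. Here `T ∈ (0,∞]` is modelled as an extended real number. -/
theorem stmt_4 {X : Type*} [MeasurableSpace X] (𝔪 : Measure X) [IsFiniteMeasure 𝔪]
    (T : EReal) (hT : 0 < T)
    (r₁ r₂ μ₁ μ₂ r : ℝ) (hr₁ : 2 ≤ r₁) (hr₂ : 2 ≤ r₂)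
    (hμ₁ : 0 < μ₁) (hμ₂ : 0 < μ₂) (hr : 0 < r)
    (u v w : ℝ → X → ℝ)
    (hum : ∀ t : ℝ, Measurable (u t)) (hvm : ∀ t : ℝ, Measurable (v t))
    (hwm : ∀ t : ℝ, Measurable (w t))
    (hu0 : ∀ t x, 0 ≤ u t x) (hv0 : ∀ t x, 0 ≤ v t x) (hw0 : ∀ t x, 0 ≤ w t x)
    (hui : ∀ t : ℝ, 0 ≤ t → (t : EReal) < T → Integrable (u t) 𝔪)
    (hvi : ∀ t : ℝ, 0 ≤ t → (t : EReal) < T → Integrable (v t) 𝔪)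
    (hwi : ∀ t : ℝ, 0 ≤ t → (t : EReal) < T → Integrable (w t) 𝔪)
    (hur : ∀ t : ℝ, 0 ≤ t → (t : EReal) < T → Integrable (fun x => u t x ^ r₁) 𝔪)
    (hvr : ∀ t : ℝ, 0 ≤ t → (t : EReal) < T → Integrable (fun x => v t x ^ r₂) 𝔪)
    (huv : ∀ t : ℝ, 0 ≤ t → (t : EReal) < T → Integrable (fun x => u t x * v t x) 𝔪)
    (U V W : ℝ → ℝ)
    (hU : ∀ t, U t = ∫ x, u t x ∂𝔪) (hV : ∀ t, V t = ∫ x, v t x ∂𝔪)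
    (hW : ∀ t, W t = ∫ x, w t x ∂𝔪)
    (hUc : ContinuousOn U {t : ℝ | 0 ≤ t ∧ (t : EReal) < T})
    (hVc : ContinuousOn V {t : ℝ | 0 ≤ t ∧ (t : EReal) < T})
    (hWc : ContinuousOn W {t : ℝ | 0 ≤ t ∧ (t : EReal) < T})
    (hU' : ∀ t : ℝ, 0 < t → (t : EReal) < T →
      HasDerivAt U (W t - μ₁ * ∫ x, u t x ^ r₁ ∂𝔪) t)
    (hV' : ∀ t : ℝ, 0 < t → (t : EReal) < T →
      HasDerivAt V (W t + r * (∫ x, u t x * v t x ∂𝔪) - μ₂ * ∫ x, v t x ^ r₂ ∂𝔪) t)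
    (hW' : ∀ t : ℝ, 0 < t → (t : EReal) < T →
      HasDerivAt W (U t + V t - W t) t) :
    ∃ C : ℝ, 0 < C ∧ ∀ t : ℝ, 0 ≤ t → (t : EReal) < T → U t + V t + W t ≤ C := by
  -- opaque constants
  obtain ⟨m, hmdef⟩ : ∃ x : ℝ, x = (𝔪 Set.univ).toReal := ⟨_, rfl⟩
  have hm0 : (0:ℝ) ≤ m := hmdef ▸ ENNReal.toReal_nonneg
  obtain ⟨c₀, hc₀def⟩ : ∃ x : ℝ, x = r + 2*r^2/μ₂ := ⟨_, rfl⟩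
  have hc₀ : 0 < c₀ := by rw [hc₀def]; positivity
  obtain ⟨a, hadef⟩ : ∃ x : ℝ, x = max 1 (2*c₀/μ₁) := ⟨_, rfl⟩
  have ha1 : (1:ℝ) ≤ a := hadef ▸ le_max_left _ _
  have ha0 : (0:ℝ) < a := lt_of_lt_of_le one_pos ha1
  have haμ : 2*c₀ ≤ a*μ₁ := by
    have h : 2*c₀/μ₁ ≤ a := hadef ▸ le_max_right _ _
    exact (div_le_iff₀ hμ₁).mp h
  obtain ⟨c, hcdef⟩ : ∃ x : ℝ, x = 2*(a+1) := ⟨_, rfl⟩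
  have hc1 : (1:ℝ) ≤ c := by rw [hcdef]; linarith
  have haμ₁pos : (0:ℝ) < a*μ₁ := mul_pos ha0 hμ₁
  obtain ⟨M₁, hM₁def⟩ : ∃ x : ℝ, x = max 1 (2*(c+a)/(a*μ₁)) := ⟨_, rfl⟩
  have hM₁1 : (1:ℝ) ≤ M₁ := hM₁def ▸ le_max_left _ _
  have hM₁ : 2*(c+a) ≤ M₁*(a*μ₁) := by
    have h : 2*(c+a)/(a*μ₁) ≤ M₁ := hM₁def ▸ le_max_right _ _
    exact (div_le_iff₀ haμ₁pos).mp h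
  obtain ⟨M₂, hM₂def⟩ : ∃ x : ℝ, x = max 1 (2*(c+1)/μ₂) := ⟨_, rfl⟩
  have hM₂1 : (1:ℝ) ≤ M₂ := hM₂def ▸ le_max_left _ _
  have hM₂ : 2*(c+1) ≤ M₂*μ₂ := by
    have h : 2*(c+1)/μ₂ ≤ M₂ := hM₂def ▸ le_max_right _ _
    exact (div_le_iff₀ hμ₂).mp h
  obtain ⟨K, hKdef⟩ : ∃ x : ℝ, x = c₀*m + a*μ₁/2*M₁^2*m + μ₂/2*M₂^2*m := ⟨_, rfl⟩
  have hK0 : (0:ℝ) ≤ K := by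
    have t1 : (0:ℝ) ≤ c₀*m := mul_nonneg hc₀.le hm0
    have t2 : (0:ℝ) ≤ a*μ₁/2*M₁^2*m :=
      mul_nonneg (mul_nonneg (by linarith) (sq_nonneg M₁)) hm0
    have t3 : (0:ℝ) ≤ μ₂/2*M₂^2*m :=
      mul_nonneg (mul_nonneg (by linarith) (sq_nonneg M₂)) hm0
    rw [hKdef]; linarith
  obtain ⟨η, hηdef⟩ : ∃ x : ℝ, x = μ₂/(2*r) := ⟨_, rfl⟩
  have hη : (0:ℝ) < η := by rw [hηdef]; positivity
  obtain ⟨F, hFdef⟩ : ∃ f : ℝ → ℝ, f = fun t => a * U t + V t + c * W t := ⟨_, rfl⟩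
  have hFeq : ∀ t, F t = a * U t + V t + c * W t := fun t => by rw [hFdef]
  have hU0 : ∀ t, 0 ≤ U t := fun t => by rw [hU t]; exact integral_nonneg (fun x => hu0 t x)
  have hV0 : ∀ t, 0 ≤ V t := fun t => by rw [hV t]; exact integral_nonneg (fun x => hv0 t x)
  have hW0 : ∀ t, 0 ≤ W t := fun t => by rw [hW t]; exact integral_nonneg (fun x => hw0 t x)
  have hFc : ContinuousOn F {t : ℝ | 0 ≤ t ∧ (t : EReal) < T} := by
    rw [hFdef]
    exact ((continuousOn_const.mul hUc).add hVc).add (continuousOn_const.mul hWc)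
  -- the key differential inequality
  have key : ∀ t : ℝ, 0 < t → (t : EReal) < T →
      ∃ d : ℝ, HasDerivAt F d t ∧ d ≤ K - F t / 2 := by
    intro t ht0 htT
    have ht0' : (0:ℝ) ≤ t := ht0.le
    obtain ⟨A, hAdef⟩ : ∃ x : ℝ, x = ∫ x, u t x ^ r₁ ∂𝔪 := ⟨_, rfl⟩
    obtain ⟨B, hBdef⟩ : ∃ x : ℝ, x = ∫ x, u t x * v t x ∂𝔪 := ⟨_, rfl⟩
    obtain ⟨D, hDdef⟩ : ∃ x : ℝ, x = ∫ x, v t x ^ r₂ ∂𝔪 := ⟨_, rfl⟩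
    refine ⟨a*(W t - μ₁*A) + (W t + r*B - μ₂*D) + c*(U t + V t - W t), ?_, ?_⟩
    · rw [hFdef, hAdef, hBdef, hDdef]
      exact (((hU' t ht0 htT).const_mul a).add (hV' t ht0 htT)).add
        ((hW' t ht0 htT).const_mul c)
    · have hA0 : 0 ≤ A := hAdef ▸ integral_nonneg fun x => Real.rpow_nonneg (hu0 t x) r₁
      have hD0 : 0 ≤ D := hDdef ▸ integral_nonneg fun x => Real.rpow_nonneg (hv0 t x) r₂
      have h2 : M₁ * U t - m * M₁^2 ≤ A := by
        have hint : Integrable (fun x => M₁ * u t x - M₁^2) 𝔪 :=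
          ((hui t ht0' htT).const_mul M₁).sub (integrable_const _)
        have h := integral_mono hint (hur t ht0' htT)
          (fun x => aux_lin (hu0 t x) hM₁1 hr₁)
        rwa [integral_sub ((hui t ht0' htT).const_mul M₁) (integrable_const _),
          integral_const_mul, integral_const, smul_eq_mul, ← hU t, measureReal_def, ← hmdef, ← hAdef] at h
      have h3 : M₂ * V t - m * M₂^2 ≤ D := by
        have hint : Integrable (fun x => M₂ * v t x - M₂^2) 𝔪 :=
          ((hvi t ht0' htT).const_mul M₂).sub (integrable_const _)
        have h := integral_mono hint (hvr t ht0' htT)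
          (fun x => aux_lin (hv0 t x) hM₂1 hr₂)
        rwa [integral_sub ((hvi t ht0' htT).const_mul M₂) (integrable_const _),
          integral_const_mul, integral_const, smul_eq_mul, ← hV t, measureReal_def, ← hmdef, ← hDdef] at h
      have hBle : B ≤ η * D + (1 + 1/η) * (A + m) := by
        have haux0 : Integrable (fun x => u t x ^ r₁ + 1) 𝔪 :=
          (hur t ht0' htT).add (integrable_const 1)
        have haux1 : Integrable (fun x => η * v t x ^ r₂) 𝔪 :=
          (hvr t ht0' htT).const_mul η
        have haux2 : Integrable (fun x => (1 + 1/η) * (u t x ^ r₁ + 1)) 𝔪 :=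
          haux0.const_mul (1 + 1/η)
        have hint2 : Integrable (fun x => η * v t x ^ r₂ + (1 + 1/η) * (u t x ^ r₁ + 1)) 𝔪 :=
          haux1.add haux2
        have h := integral_mono (huv t ht0' htT) hint2
          (fun x => aux_young (hu0 t x) (hv0 t x) hr₁ hr₂ hη)
        have hone : Integrable (fun _ : X => (1:ℝ)) 𝔪 := integrable_const 1
        rwa [integral_add haux1 haux2,
          integral_const_mul, integral_const_mul,
          integral_add (hur t ht0' htT) hone,
          integral_const, smul_eq_mul, mul_one, measureReal_def, ← hmdef, ← hAdef, ← hBdef, ← hDdef] at h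
      have h1 : r * B ≤ μ₂/2 * D + c₀ * A + c₀ * m := by
        have h := mul_le_mul_of_nonneg_left hBle hr.le
        have e1 : r * (η * D + (1 + 1/η) * (A + m)) = μ₂/2 * D + c₀ * A + c₀ * m := by
          rw [hηdef, hc₀def]; field_simp; ring
        linarith [e1 ▸ h]
      have P1 : a*μ₁/2 * (M₁ * U t - m * M₁^2) ≤ a*μ₁/2 * A :=
        mul_le_mul_of_nonneg_left h2 (by linarith)
      have P2 : μ₂/2 * (M₂ * V t - m * M₂^2) ≤ μ₂/2 * D :=
        mul_le_mul_of_nonneg_left h3 (by linarith)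
      have P3 : 0 ≤ (a*μ₁ - 2*c₀) * A := mul_nonneg (by linarith) hA0
      have P4 : 2*(c+a) * U t ≤ M₁*(a*μ₁) * U t := mul_le_mul_of_nonneg_right hM₁ (hU0 t)
      have P5 : 2*(c+1) * V t ≤ M₂*μ₂ * V t := mul_le_mul_of_nonneg_right hM₂ (hV0 t)
      have P6 : 0 ≤ a * U t := mul_nonneg ha0.le (hU0 t)
      have E1 : c * W t = 2*(a+1) * W t := by rw [hcdef]
      rw [hFeq t]
      linarith [h1, P1, P2, P3, P4, P5, P6, hV0 t, hW0 t, E1, hKdef]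
  -- Gronwall-type conclusion
  refine ⟨max (F 0) (2*K) + 1, ?_, ?_⟩
  · have := le_max_right (F 0) (2*K); linarith
  · intro t ht0 htT
    have hUVWF : U t + V t + W t ≤ F t := by
      have g1 : 0 ≤ (a-1) * U t := mul_nonneg (by linarith) (hU0 t)
      have g2 : 0 ≤ (c-1) * W t := mul_nonneg (by linarith) (hW0 t)
      rw [hFeq t]; nlinarith
    rcases eq_or_lt_of_le ht0 with hteq | htpos
    · have : F t ≤ max (F 0) (2*K) := by rw [← hteq]; exact le_max_left _ _
      linarith
    · suffices hFt : F t ≤ max (F 0) (2*K) by linarith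
      have hsub : Set.Icc (0:ℝ) t ⊆ {s : ℝ | 0 ≤ s ∧ (s : EReal) < T} := by
        intro s hs
        refine ⟨hs.1, lt_of_le_of_lt ?_ htT⟩
        exact_mod_cast hs.2
      have hgc : ContinuousOn (fun s => (F s - 2*K) * Real.exp (s/2)) (Set.Icc 0 t) :=
        ((hFc.mono hsub).sub continuousOn_const).mul
          ((Real.continuous_exp.comp (continuous_id.div_const 2)).continuousOn)
      have hderiv : ∀ s ∈ Set.Ioo (0:ℝ) t,
          ∃ d, HasDerivAt (fun s => (F s - 2*K) * Real.exp (s/2)) d s ∧ d ≤ 0 := by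
        intro s hs
        have hsT : (s : EReal) < T := lt_trans (by exact_mod_cast hs.2) htT
        obtain ⟨d, hdF, hdle⟩ := key s hs.1 hsT
        have hexp : HasDerivAt (fun s : ℝ => Real.exp (s/2)) (Real.exp (s/2) * (1/2)) s :=
          by have := (Real.hasDerivAt_exp (s/2)).comp s ((hasDerivAt_id s).div_const 2); exact this
        refine ⟨d * Real.exp (s/2) + (F s - 2*K) * (Real.exp (s/2) * (1/2)),
          (hdF.sub_const (2*K)).mul hexp, ?_⟩
        have hE := Real.exp_pos (s/2)
        nlinarith [mul_le_mul_of_nonneg_right hdle hE.le]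
      have hga : AntitoneOn (fun s => (F s - 2*K) * Real.exp (s/2)) (Set.Icc 0 t) := by
        apply antitoneOn_of_deriv_nonpos (convex_Icc 0 t) hgc
        · intro s hs
          rw [interior_Icc] at hs
          obtain ⟨d, hd, _⟩ := hderiv s hs
          exact hd.differentiableAt.differentiableWithinAt
        · intro s hs
          rw [interior_Icc] at hs
          obtain ⟨d, hd, hd0⟩ := hderiv s hs
          rw [hd.deriv]; exact hd0
      have h := hga (Set.left_mem_Icc.mpr ht0) (Set.right_mem_Icc.mpr ht0) ht0
      simp only [zero_div, Real.exp_zero, mul_one] at h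
      have hE : 1 ≤ Real.exp (t/2) := Real.one_le_exp (by linarith)
      have hF0 : F 0 ≤ max (F 0) (2*K) := le_max_left _ _
      have hKm : 2*K ≤ max (F 0) (2*K) := le_max_right _ _
      by_cases hcase : F t ≤ 2*K
      · linarith
      · push_neg at hcase
        have h2 : F t - 2*K ≤ (F t - 2*K) * Real.exp (t/2) :=
          le_mul_of_one_le_right (by linarith) hE
        linarith
end

section
/- Let (X, 𝔪) be a measure space with 𝔪(X) < ∞, let T ∈ (0,∞], and let μ₁ > 0, μ₂ > 0, r > 0 be real numbers. Suppose u, v, w : [0,T) → (X → ℝ) are families of nonnegative measurable functions such that for every t the functions u(t), v(t), w(t), u(t)², v(t)² and u(t)·v(t) are integrable, the mass functions U(t) = ∫_X u(t) d𝔪, V(t) = ∫_X v(t) d𝔪 and W(t) = ∫_X w(t) d𝔪 are continuous on [0,T) and differentiable on (0,T), the maps t ↦ ∫_X u(t)² d𝔪 and t ↦ ∫_X v(t)² d𝔪 are locally integrable on (0,T), and for all t ∈ (0,T): U'(t) = W(t) − μ₁ ∫_X u(t)² d𝔪, V'(t) = W(t) + r ∫_X u(t)·v(t) d𝔪 − μ₂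 ∫_X v(t)² d𝔪, and W'(t) = U(t) + V(t) − W(t). Let τ = min{1, T/4} if T < ∞ and τ = 1 if T = ∞. Then there exists a constant C > 0 such that ∫_t^{t+τ} ( ∫_X u(s)² d𝔪 + ∫_X v(s)² d𝔪 ) ds ≤ C for all t ∈ (0, T − τ). -/
open MeasureTheory

/-- Elementary AM-GM: `x*y ≤ (p/(2q)) x² + (q/(2p)) y²` for `p, q > 0`. -/
private lemma amgm_aux {p q : ℝ} (hp : 0 < p) (hq : 0 < q) (x y : ℝ) :
    x * y ≤ (p / (2 * q)) * x ^ 2 + (q / (2 * p)) * y ^ 2 := by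
  rw [← sub_nonneg]
  have e : (p / (2 * q)) * x ^ 2 + (q / (2 * p)) * y ^ 2 - x * y
      = (p * x - q * y) ^ 2 / (2 * p * q) := by
    field_simp
    ring
  rw [e]
  positivity

/-- Elementary: `c*x ≤ ε x² + c²/(4ε)` for `ε > 0`. -/
private lemma lin_quad_aux {ε : ℝ} (hε : 0 < ε) (c x : ℝ) :
    c * x ≤ ε * x ^ 2 + c ^ 2 / (4 * ε) := by
  rw [← sub_nonneg]
  have e : ε * x ^ 2 + c ^ 2 / (4 * ε) - c * x = (2 * ε * x - c) ^ 2 / (4 * ε) := by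
    field_simp
    ring
  rw [e]
  positivity

private lemma master_arith (a μ₁ μ₂ r m C₁ U V Wv Q₁ Q₂ Q₁₂ G : ℝ)
    (I1 : r * Q₁₂ ≤ (r ^ 2 / (2 * μ₂)) * Q₁ + (μ₂ / 2) * Q₂)
    (IU : (a + 3) * U ≤ (μ₁ / 2) * Q₁ + (a + 3) ^ 2 / (2 * μ₁) * m)
    (IV : (a + 3) * V ≤ (μ₂ / 4) * Q₂ + (a + 3) ^ 2 / μ₂ * m)
    (hGle : (1 / (a + 2)) * G ≤ U + V + Wv)
    (haμQ : a * μ₁ * Q₁ = (r ^ 2 / (2 * μ₂) + μ₁) * Q₁)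
    (hCexp : C₁ = (a + 3) ^ 2 / (2 * μ₁) * m + (a + 3) ^ 2 / μ₂ * m)
    (hW : 0 ≤ Wv) :
    a * (Wv - μ₁ * Q₁) + (Wv + r * Q₁₂ - μ₂ * Q₂) + (a + 2) * (U + V - Wv) + (1 / (a + 2)) * G
      ≤ C₁ - (μ₁ / 2) * Q₁ - (μ₂ / 4) * Q₂ := by
  linarith [I1, IU, IV, hGle, haμQ, hCexp, hW]

private lemma sq_amgm_aux (x y : ℝ) : x * y ≤ (1/2 : ℝ) * (x ^ 2 + y ^ 2) := by
  nlinarith [sq_nonneg (x - y)]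

set_option maxHeartbeats 1600000 in
/-- Uniform sliding-window space-time L² bound (display (3.71) in Lemma 4.2) on an abstract
finite measure space: under the mass identities obtained by integrating the Alopecia Areata
system with quadratic degradation, with `τ = min{1, T/4}` if `T < ∞` and `τ = 1` otherwise,
the quantity `∫_t^{t+τ} (∫ u² + ∫ v²)` is bounded uniformly in `t ∈ (0, T-τ)`. -/
theorem stmt_5 {X : Type*} [MeasurableSpace X] (𝔪 : Measure X) [IsFiniteMeasure 𝔪]
    (T : EReal) (hT : 0 < T)
    (μ₁ μ₂ r : ℝ) (hμ₁ : 0 < μ₁) (hμ₂ : 0 < μ₂) (hr : 0 < r)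
    (u v w : ℝ → X → ℝ)
    (hum : ∀ t : ℝ, Measurable (u t)) (hvm : ∀ t : ℝ, Measurable (v t))
    (hwm : ∀ t : ℝ, Measurable (w t))
    (hu0 : ∀ t x, 0 ≤ u t x) (hv0 : ∀ t x, 0 ≤ v t x) (hw0 : ∀ t x, 0 ≤ w t x)
    (hui : ∀ t : ℝ, 0 ≤ t → (t : EReal) < T → Integrable (u t) 𝔪)
    (hvi : ∀ t : ℝ, 0 ≤ t → (t : EReal) < T → Integrable (v t) 𝔪)
    (hwi : ∀ t : ℝ, 0 ≤ t → (t : EReal) < T → Integrable (w t) 𝔪)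
    (hu2 : ∀ t : ℝ, 0 ≤ t → (t : EReal) < T → Integrable (fun x => u t x ^ 2) 𝔪)
    (hv2 : ∀ t : ℝ, 0 ≤ t → (t : EReal) < T → Integrable (fun x => v t x ^ 2) 𝔪)
    (huv : ∀ t : ℝ, 0 ≤ t → (t : EReal) < T → Integrable (fun x => u t x * v t x) 𝔪)
    (U V W : ℝ → ℝ)
    (hU : ∀ t, U t = ∫ x, u t x ∂𝔪) (hV : ∀ t, V t = ∫ x, v t x ∂𝔪)
    (hW : ∀ t, W t = ∫ x, w t x ∂𝔪)
    (hUc : ContinuousOn U {t : ℝ | 0 ≤ t ∧ (t : EReal) < T})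
    (hVc : ContinuousOn V {t : ℝ | 0 ≤ t ∧ (t : EReal) < T})
    (hWc : ContinuousOn W {t : ℝ | 0 ≤ t ∧ (t : EReal) < T})
    (hu2loc : LocallyIntegrableOn (fun t => ∫ x, u t x ^ 2 ∂𝔪)
      {t : ℝ | 0 < t ∧ (t : EReal) < T})
    (hv2loc : LocallyIntegrableOn (fun t => ∫ x, v t x ^ 2 ∂𝔪)
      {t : ℝ | 0 < t ∧ (t : EReal) < T})
    (hU' : ∀ t : ℝ, 0 < t → (t : EReal) < T →
      HasDerivAt U (W t - μ₁ * ∫ x, u t x ^ 2 ∂𝔪) t)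
    (hV' : ∀ t : ℝ, 0 < t → (t : EReal) < T →
      HasDerivAt V (W t + r * (∫ x, u t x * v t x ∂𝔪) - μ₂ * ∫ x, v t x ^ 2 ∂𝔪) t)
    (hW' : ∀ t : ℝ, 0 < t → (t : EReal) < T →
      HasDerivAt W (U t + V t - W t) t)
    (τ : ℝ) (hτ : τ = if T = ⊤ then 1 else min 1 (T.toReal / 4)) :
    ∃ C : ℝ, 0 < C ∧ ∀ t : ℝ, 0 < t → ((t + τ : ℝ) : EReal) < T →
      ∫ s in t..t + τ, ((∫ x, u s x ^ 2 ∂𝔪) + ∫ x, v s x ^ 2 ∂𝔪) ≤ C := by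
  classical
  -- abbreviations for the space integrals
  set Q₁ : ℝ → ℝ := fun s => ∫ x, u s x ^ 2 ∂𝔪 with hQ₁def
  set Q₂ : ℝ → ℝ := fun s => ∫ x, v s x ^ 2 ∂𝔪 with hQ₂def
  set Q₁₂ : ℝ → ℝ := fun s => ∫ x, u s x * v s x ∂𝔪 with hQ₁₂def
  have hQ₁eq : ∀ s : ℝ, (∫ x, u s x ^ 2 ∂𝔪) = Q₁ s := fun s => rfl
  have hQ₂eq : ∀ s : ℝ, (∫ x, v s x ^ 2 ∂𝔪) = Q₂ s := fun s => rfl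
  have hQ₁₂eq : ∀ s : ℝ, (∫ x, u s x * v s x ∂𝔪) = Q₁₂ s := fun s => rfl
  -- positivity of τ
  have hτpos : 0 < τ := by
    rw [hτ]
    split_ifs with h
    · norm_num
    · refine lt_min one_pos ?_
      have hb : T ≠ ⊥ := by
        intro hb
        rw [hb] at hT
        exact absurd hT (by simp)
      have hco := EReal.coe_toReal h hb
      rw [← hco] at hT
      have : (0 : ℝ) < T.toReal := by exact_mod_cast hT
      linarith
  -- basic nonnegativity
  have hUnn : ∀ s, 0 ≤ U s := fun s => by
    rw [hU]; exact integral_nonneg (hu0 s)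
  have hVnn : ∀ s, 0 ≤ V s := fun s => by
    rw [hV]; exact integral_nonneg (hv0 s)
  have hWnn : ∀ s, 0 ≤ W s := fun s => by
    rw [hW]; exact integral_nonneg (hw0 s)
  have hQ₁nn : ∀ s, 0 ≤ Q₁ s := fun s =>
    integral_nonneg (fun x => by positivity)
  have hQ₂nn : ∀ s, 0 ≤ Q₂ s := fun s =>
    integral_nonneg (fun x => by positivity)
  have hQ₁₂nn : ∀ s, 0 ≤ Q₁₂ s := fun s =>
    integral_nonneg (fun x => mul_nonneg (hu0 s x) (hv0 s x))
  -- constants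
  set m : ℝ := (𝔪 Set.univ).toReal with hmdef
  have hmnn : 0 ≤ m := ENNReal.toReal_nonneg
  set a : ℝ := (r ^ 2 / (2 * μ₂) + μ₁) / μ₁ with hadef
  have ha1 : 1 ≤ a := by
    rw [hadef, le_div_iff₀ hμ₁]
    have : 0 ≤ r ^ 2 / (2 * μ₂) := by positivity
    linarith
  have ha2pos : (0 : ℝ) < a + 2 := by linarith
  have haμ : a * μ₁ = r ^ 2 / (2 * μ₂) + μ₁ := by
    rw [hadef, div_mul_cancel₀ _ (ne_of_gt hμ₁)]
  set C₁ : ℝ := (a + 3) ^ 2 * m * (1 / (2 * μ₁) + 1 / μ₂) with hC₁def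
  have hC₁nn : 0 ≤ C₁ := by
    have h1 : (0:ℝ) ≤ (a+3)^2 := sq_nonneg _
    have h2 : (0:ℝ) ≤ 1 / (2 * μ₁) + 1 / μ₂ := by positivity
    positivity
  -- Lyapunov functional and its derivative
  set G : ℝ → ℝ := fun s => a * U s + V s + (a + 2) * W s with hGdef
  set D : ℝ → ℝ := fun s =>
    a * (W s - μ₁ * Q₁ s) + (W s + r * Q₁₂ s - μ₂ * Q₂ s) + (a + 2) * (U s + V s - W s)
    with hDdef
  have hGnn : ∀ s, 0 ≤ G s := fun s => by
    have := hUnn s; have := hVnn s; have := hWnn s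
    have ha0 : (0:ℝ) ≤ a := by linarith
    simp only [hGdef]
    positivity
  have hG' : ∀ s : ℝ, 0 < s → (s : EReal) < T → HasDerivAt G (D s) s := by
    intro s hs hsT
    have h1 := (hU' s hs hsT).const_mul a
    have h2 := hV' s hs hsT
    have h3 := (hW' s hs hsT).const_mul (a + 2)
    exact (h1.add h2).add h3
  have hGc : ContinuousOn G {t : ℝ | 0 ≤ t ∧ (t : EReal) < T} :=
    ((continuousOn_const.mul hUc).add hVc).add (continuousOn_const.mul hWc)
  -- master differential inequality
  have master : ∀ s : ℝ, 0 < s → (s : EReal) < T →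
      D s + (1 / (a + 2)) * G s ≤ C₁ - (μ₁ / 2) * Q₁ s - (μ₂ / 4) * Q₂ s := by
    intro s hs hsT
    have hs0 : (0:ℝ) ≤ s := hs.le
    -- cross term estimate
    have I1 : r * Q₁₂ s ≤ (r ^ 2 / (2 * μ₂)) * Q₁ s + (μ₂ / 2) * Q₂ s := by
      have hpt : ∀ x : X, r * (u s x * v s x)
          ≤ (r ^ 2 / (2 * μ₂)) * u s x ^ 2 + (μ₂ / 2) * v s x ^ 2 := by
        intro x
        have h := amgm_aux hr hμ₂ (u s x) (v s x)
        have h2 := mul_le_mul_of_nonneg_left h hr.le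
        calc r * (u s x * v s x)
            ≤ r * ((r / (2 * μ₂)) * u s x ^ 2 + (μ₂ / (2 * r)) * v s x ^ 2) := h2
          _ = (r ^ 2 / (2 * μ₂)) * u s x ^ 2 + (μ₂ / 2) * v s x ^ 2 := by
              field_simp
      calc r * Q₁₂ s = ∫ x, r * (u s x * v s x) ∂𝔪 := by
            rw [integral_const_mul]
        _ ≤ ∫ x, ((r ^ 2 / (2 * μ₂)) * u s x ^ 2 + (μ₂ / 2) * v s x ^ 2) ∂𝔪 :=
            integral_mono ((huv s hs0 hsT).const_mul r)
              (((hu2 s hs0 hsT).const_mul _).add ((hv2 s hs0 hsT).const_mul _))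
              hpt
        _ = (r ^ 2 / (2 * μ₂)) * Q₁ s + (μ₂ / 2) * Q₂ s := by
            rw [integral_add ((hu2 s hs0 hsT).const_mul _) ((hv2 s hs0 hsT).const_mul _),
              integral_const_mul, integral_const_mul]
    -- linear-vs-quadratic estimates
    have IU : (a + 3) * U s ≤ (μ₁ / 2) * Q₁ s + (a + 3) ^ 2 / (2 * μ₁) * m := by
      have hε : (0:ℝ) < μ₁ / 2 := by linarith
      calc (a + 3) * U s = ∫ x, (a + 3) * u s x ∂𝔪 := by
            rw [hU, integral_const_mul]
        _ ≤ ∫ x, ((μ₁ / 2) * u s x ^ 2 + (a + 3) ^ 2 / (4 * (μ₁ / 2))) ∂𝔪 :=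
            integral_mono ((hui s hs0 hsT).const_mul _)
              (((hu2 s hs0 hsT).const_mul _).add (integrable_const _))
              (fun x => lin_quad_aux hε _ _)
        _ = (μ₁ / 2) * Q₁ s + (a + 3) ^ 2 / (2 * μ₁) * m := by
            rw [integral_add ((hu2 s hs0 hsT).const_mul _) (integrable_const _),
              integral_const_mul, integral_const, smul_eq_mul]
            have : (a + 3) ^ 2 / (4 * (μ₁ / 2)) = (a + 3) ^ 2 / (2 * μ₁) := by
              ring_nf
            rw [this, measureReal_def, ← hmdef]
            ring
    have IV : (a + 3) * V s ≤ (μ₂ / 4) * Q₂ s + (a + 3) ^ 2 / μ₂ * m := by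
      have hε : (0:ℝ) < μ₂ / 4 := by linarith
      calc (a + 3) * V s = ∫ x, (a + 3) * v s x ∂𝔪 := by
            rw [hV, integral_const_mul]
        _ ≤ ∫ x, ((μ₂ / 4) * v s x ^ 2 + (a + 3) ^ 2 / (4 * (μ₂ / 4))) ∂𝔪 :=
            integral_mono ((hvi s hs0 hsT).const_mul _)
              (((hv2 s hs0 hsT).const_mul _).add (integrable_const _))
              (fun x => lin_quad_aux hε _ _)
        _ = (μ₂ / 4) * Q₂ s + (a + 3) ^ 2 / μ₂ * m := by
            rw [integral_add ((hv2 s hs0 hsT).const_mul _) (integrable_const _),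
              integral_const_mul, integral_const, smul_eq_mul]
            have : (a + 3) ^ 2 / (4 * (μ₂ / 4)) = (a + 3) ^ 2 / μ₂ := by
              ring_nf
            rw [this, measureReal_def, ← hmdef]
            ring
    -- bound on the (1/(a+2)) G term
    have hGle : (1 / (a + 2)) * G s ≤ U s + V s + W s := by
      rw [one_div, inv_mul_le_iff₀ ha2pos]
      have h1 : a * U s ≤ (a + 2) * U s :=
        mul_le_mul_of_nonneg_right (by linarith) (hUnn s)
      have h2 : V s ≤ (a + 2) * V s := by
        nlinarith [hVnn s]
      have h3 : (a + 2) * W s ≤ (a + 2) * W s := le_rfl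
      simp only [hGdef]
      linarith [h1, h2]
    have haμQ : a * μ₁ * Q₁ s = (r ^ 2 / (2 * μ₂) + μ₁) * Q₁ s := by rw [haμ]
    have hCexp : C₁ = (a + 3) ^ 2 / (2 * μ₁) * m + (a + 3) ^ 2 / μ₂ * m := by
      rw [hC₁def]; ring
    simp only [hDdef]
    exact master_arith a μ₁ μ₂ r m C₁ (U s) (V s) (W s) (Q₁ s) (Q₂ s) (Q₁₂ s) (G s)
      I1 IU IV hGle haμQ hCexp (hWnn s)
  -- make everything opaque from here on (definitional content no longer needed)
  clear_value Q₁ Q₂ Q₁₂ m a C₁ G D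
  -- uniform bound on G
  obtain ⟨C₂, hC₂def⟩ : ∃ C₂ : ℝ, C₂ = (a + 2) * C₁ := ⟨_, rfl⟩
  have hC₂nn : 0 ≤ C₂ := hC₂def ▸ mul_nonneg (by linarith : (0:ℝ) ≤ a + 2) hC₁nn
  obtain ⟨M, hMdef⟩ : ∃ M : ℝ, M = C₂ + |G 0 - C₂| := ⟨_, rfl⟩
  have hMnn : 0 ≤ M := by rw [hMdef]; exact add_nonneg hC₂nn (abs_nonneg _)
  have hGbdd : ∀ s₀ : ℝ, 0 < s₀ → (s₀ : EReal) < T → G s₀ ≤ M := by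
    intro s₀ hs₀ hs₀T
    have hsubS : Set.Icc (0:ℝ) s₀ ⊆ {t : ℝ | 0 ≤ t ∧ (t : EReal) < T} := by
      intro s hs
      exact ⟨hs.1, lt_of_le_of_lt (EReal.coe_le_coe_iff.2 hs.2) hs₀T⟩
    have hΦc : ContinuousOn (fun s => (G s - C₂) * Real.exp (s / (a + 2)))
        (Set.Icc (0:ℝ) s₀) :=
      (((hGc.mono hsubS).sub continuousOn_const).mul
        ((Real.continuous_exp.comp (continuous_id.div_const _)).continuousOn))
    have hder : ∀ x ∈ Set.Ioo (0:ℝ) s₀,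
        HasDerivAt (fun s => (G s - C₂) * Real.exp (s / (a + 2)))
          (Real.exp (x / (a + 2)) * (D x + (1 / (a + 2)) * G x - C₁)) x := by
      intro x hx
      have hxT : (x : EReal) < T := lt_trans (EReal.coe_lt_coe_iff.2 hx.2) hs₀T
      have h1 : HasDerivAt (fun s => G s - C₂) (D x) x := (hG' x hx.1 hxT).sub_const _
      have h2 : HasDerivAt (fun s : ℝ => Real.exp (s / (a + 2)))
          (Real.exp (x / (a + 2)) * (1 / (a + 2))) x := by
        have h3 : HasDerivAt (fun s : ℝ => s / (a + 2)) (1 / (a + 2)) x := by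
          simpa using (hasDerivAt_id x).div_const (a + 2)
        exact h3.exp
      have h4 := h1.mul h2
      refine HasDerivAt.congr_deriv h4 ?_
      rw [hC₂def]
      have ha2ne : a + 2 ≠ 0 := ne_of_gt ha2pos
      field_simp
      ring
    have hanti : AntitoneOn (fun s => (G s - C₂) * Real.exp (s / (a + 2)))
        (Set.Icc (0:ℝ) s₀) := by
      refine antitoneOn_of_deriv_nonpos (convex_Icc _ _) hΦc ?_ ?_
      · intro x hx
        rw [interior_Icc] at hx
        exact (hder x hx).differentiableAt.differentiableWithinAt
      · intro x hx
        rw [interior_Icc] at hx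
        rw [(hder x hx).deriv]
        have hxT : (x : EReal) < T := lt_trans (EReal.coe_lt_coe_iff.2 hx.2) hs₀T
        have hm := master x hx.1 hxT
        have hnn1 : 0 ≤ (μ₁ / 2) * Q₁ x := mul_nonneg (by linarith) (hQ₁nn x)
        have hnn2 : 0 ≤ (μ₂ / 4) * Q₂ x := mul_nonneg (by linarith) (hQ₂nn x)
        have hpar : D x + (1 / (a + 2)) * G x - C₁ ≤ 0 := by linarith
        exact mul_nonpos_of_nonneg_of_nonpos (Real.exp_nonneg _) hpar
    have hΦ0 : (G s₀ - C₂) * Real.exp (s₀ / (a + 2)) ≤ G 0 - C₂ := by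
      have h0mem : (0:ℝ) ∈ Set.Icc (0:ℝ) s₀ := Set.left_mem_Icc.2 hs₀.le
      have hsmem : s₀ ∈ Set.Icc (0:ℝ) s₀ := Set.right_mem_Icc.2 hs₀.le
      have := hanti h0mem hsmem hs₀.le
      simpa using this
    rcases le_or_gt (G s₀) C₂ with h | h
    · rw [hMdef]
      have := abs_nonneg (G 0 - C₂)
      linarith
    · have he : 1 ≤ Real.exp (s₀ / (a + 2)) :=
        Real.one_le_exp (by positivity)
      have h2 : G s₀ - C₂ ≤ (G s₀ - C₂) * Real.exp (s₀ / (a + 2)) :=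
        le_mul_of_one_le_right (by linarith) he
      have h3 := le_abs_self (G 0 - C₂)
      rw [hMdef]
      linarith
  -- the sliding-window estimate
  obtain ⟨c, hcdef⟩ : ∃ c : ℝ, c = min (μ₁ / 2) (μ₂ / 4) := ⟨_, rfl⟩
  have hcpos : 0 < c := hcdef ▸ lt_min (by linarith) (by linarith)
  have hCpos : 0 < (C₁ * τ + M) / c + 1 := by
    have h1 : 0 ≤ C₁ * τ := mul_nonneg hC₁nn hτpos.le
    have h2 : 0 ≤ (C₁ * τ + M) / c := div_nonneg (by linarith) hcpos.le
    linarith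
  refine ⟨(C₁ * τ + M) / c + 1, hCpos, ?_⟩
  intro t ht htT
  simp only [hQ₁eq, hQ₂eq]
  have httτ : t ≤ t + τ := by linarith
  have hIccsub : Set.Icc t (t + τ) ⊆ {s : ℝ | 0 < s ∧ (s : EReal) < T} := by
    intro s hs
    exact ⟨lt_of_lt_of_le ht hs.1, lt_of_le_of_lt (EReal.coe_le_coe_iff.2 hs.2) htT⟩
  have hmem : ∀ s ∈ Set.Icc t (t + τ), 0 < s ∧ (s : EReal) < T := fun s hs => hIccsub hs
  have hmem' : ∀ s ∈ Set.Icc t (t + τ), (0:ℝ) ≤ s ∧ (s : EReal) < T :=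
    fun s hs => ⟨(hmem s hs).1.le, (hmem s hs).2⟩
  have hIccS : Set.Icc t (t + τ) ⊆ {s : ℝ | 0 ≤ s ∧ (s : EReal) < T} :=
    fun s hs => hmem' s hs
  -- interval integrability of the various pieces
  have hQ₁Icc : IntegrableOn Q₁ (Set.Icc t (t + τ)) :=
    hu2loc.integrableOn_compact_subset hIccsub isCompact_Icc
  have hQ₂Icc : IntegrableOn Q₂ (Set.Icc t (t + τ)) :=
    hv2loc.integrableOn_compact_subset hIccsub isCompact_Icc
  have hQ₁int : IntervalIntegrable Q₁ MeasureTheory.volume t (t + τ) :=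
    (intervalIntegrable_iff_integrableOn_Icc_of_le httτ).2 hQ₁Icc
  have hQ₂int : IntervalIntegrable Q₂ MeasureTheory.volume t (t + τ) :=
    (intervalIntegrable_iff_integrableOn_Icc_of_le httτ).2 hQ₂Icc
  have hUint : IntervalIntegrable U MeasureTheory.volume t (t + τ) :=
    ContinuousOn.intervalIntegrable (hUc.mono (by rw [Set.uIcc_of_le httτ]; exact hIccS))
  have hVint : IntervalIntegrable V MeasureTheory.volume t (t + τ) :=
    ContinuousOn.intervalIntegrable (hVc.mono (by rw [Set.uIcc_of_le httτ]; exact hIccS))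
  have hWint : IntervalIntegrable W MeasureTheory.volume t (t + τ) :=
    ContinuousOn.intervalIntegrable (hWc.mono (by rw [Set.uIcc_of_le httτ]; exact hIccS))
  -- pointwise bound and measurability for Q₁₂
  have hQ₁₂le : ∀ s : ℝ, 0 ≤ s → (s : EReal) < T → Q₁₂ s ≤ (1/2) * (Q₁ s + Q₂ s) := by
    intro s hs0 hsT
    have hint : Integrable (fun x => (1/2 : ℝ) * (u s x ^ 2 + v s x ^ 2)) 𝔪 := by
      have h0 := ((hu2 s hs0 hsT).add (hv2 s hs0 hsT)).const_mul (1/2 : ℝ)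
      simpa using h0
    have hpt : ∀ x : X, u s x * v s x ≤ (1/2 : ℝ) * (u s x ^ 2 + v s x ^ 2) :=
      fun x => sq_amgm_aux (u s x) (v s x)
    have h1 : (∫ x, u s x * v s x ∂𝔪) ≤ ∫ x, (1/2 : ℝ) * (u s x ^ 2 + v s x ^ 2) ∂𝔪 :=
      integral_mono (huv s hs0 hsT) hint hpt
    rw [integral_const_mul, integral_add (hu2 s hs0 hsT) (hv2 s hs0 hsT),
      hQ₁eq, hQ₂eq, hQ₁₂eq] at h1
    exact h1
  have hQ₁₂int : IntervalIntegrable Q₁₂ MeasureTheory.volume t (t + τ) := by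
    rw [intervalIntegrable_iff_integrableOn_Icc_of_le httτ]
    have hmeas : AEStronglyMeasurable Q₁₂
        (MeasureTheory.volume.restrict (Set.Icc t (t + τ))) := by
      have hWm : AEStronglyMeasurable W
          (MeasureTheory.volume.restrict (Set.Icc t (t + τ))) :=
        ((hWc.mono hIccS).aemeasurable measurableSet_Icc).aestronglyMeasurable
      have hQ₂m : AEStronglyMeasurable Q₂
          (MeasureTheory.volume.restrict (Set.Icc t (t + τ))) :=
        hQ₂Icc.aestronglyMeasurable
      have hVdm : AEStronglyMeasurable (deriv V)
          (MeasureTheory.volume.restrict (Set.Icc t (t + τ))) :=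
        (measurable_deriv V).aestronglyMeasurable
      have hcomb : AEStronglyMeasurable
          (fun s => (1 / r) * (deriv V s - W s + μ₂ * Q₂ s))
          (MeasureTheory.volume.restrict (Set.Icc t (t + τ))) :=
        ((hVdm.sub hWm).add (hQ₂m.const_mul μ₂)).const_mul (1 / r)
      refine hcomb.congr ?_
      refine Filter.eventuallyEq_of_mem (self_mem_ae_restrict measurableSet_Icc) ?_
      intro s hs
      have hr' : r ≠ 0 := ne_of_gt hr
      have hds := (hV' s (hmem s hs).1 (hmem s hs).2).deriv
      rw [hQ₁₂eq, hQ₂eq] at hds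
      show (1 / r) * (deriv V s - W s + μ₂ * Q₂ s) = Q₁₂ s
      rw [hds]
      field_simp
      ring
    refine Integrable.mono' ((hQ₁Icc.add hQ₂Icc).const_mul (1/2)) hmeas ?_
    refine Filter.eventually_of_mem (self_mem_ae_restrict measurableSet_Icc) ?_
    intro s hs
    rw [Real.norm_eq_abs, abs_of_nonneg (hQ₁₂nn s)]
    exact hQ₁₂le s (hmem s hs).1.le (hmem s hs).2
  -- interval integrability of the derivative D
  have hDint : IntervalIntegrable D MeasureTheory.volume t (t + τ) := by
    rw [hDdef]
    have h1 : IntervalIntegrable (fun s => a * (W s - μ₁ * Q₁ s))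
        MeasureTheory.volume t (t + τ) := (hWint.sub (hQ₁int.const_mul μ₁)).const_mul a
    have h2 : IntervalIntegrable (fun s => W s + r * Q₁₂ s - μ₂ * Q₂ s)
        MeasureTheory.volume t (t + τ) :=
      (hWint.add (hQ₁₂int.const_mul r)).sub (hQ₂int.const_mul μ₂)
    have h3 : IntervalIntegrable (fun s => (a + 2) * (U s + V s - W s))
        MeasureTheory.volume t (t + τ) := ((hUint.add hVint).sub hWint).const_mul (a + 2)
    exact (h1.add h2).add h3
  -- fundamental theorem of calculus
  have hFTC : ∫ s in t..t + τ, D s = G (t + τ) - G t := by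
    refine intervalIntegral.integral_eq_sub_of_hasDerivAt ?_ hDint
    intro s hs
    rw [Set.uIcc_of_le httτ] at hs
    exact hG' s (hmem s hs).1 (hmem s hs).2
  -- compare the integrand with C₁ - D
  have hcmp : ∀ s ∈ Set.Icc t (t + τ), c * (Q₁ s + Q₂ s) ≤ C₁ - D s := by
    intro s hs
    have hm := master s (hmem s hs).1 (hmem s hs).2
    have hG0 : 0 ≤ (1 / (a + 2)) * G s :=
      mul_nonneg (by positivity) (hGnn s)
    have hc1 : c * Q₁ s ≤ (μ₁ / 2) * Q₁ s :=
      mul_le_mul_of_nonneg_right (hcdef ▸ min_le_left _ _) (hQ₁nn s)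
    have hc2 : c * Q₂ s ≤ (μ₂ / 4) * Q₂ s :=
      mul_le_mul_of_nonneg_right (hcdef ▸ min_le_right _ _) (hQ₂nn s)
    have : c * (Q₁ s + Q₂ s) = c * Q₁ s + c * Q₂ s := by ring
    linarith
  have hint1 : IntervalIntegrable (fun s => c * (Q₁ s + Q₂ s))
      MeasureTheory.volume t (t + τ) := (hQ₁int.add hQ₂int).const_mul c
  have hint2 : IntervalIntegrable (fun s => C₁ - D s)
      MeasureTheory.volume t (t + τ) := (intervalIntegrable_const).sub hDint
  have hmono := intervalIntegral.integral_mono_on httτ hint1 hint2 hcmp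
  have heq1 : (∫ s in t..t + τ, c * (Q₁ s + Q₂ s)) = c * ∫ s in t..t + τ, (Q₁ s + Q₂ s) :=
    intervalIntegral.integral_const_mul _ _
  have heq2 : (∫ s in t..t + τ, (C₁ - D s)) = C₁ * τ - (G (t + τ) - G t) := by
    rw [intervalIntegral.integral_sub intervalIntegrable_const hDint, hFTC,
      intervalIntegral.integral_const, smul_eq_mul]
    ring
  rw [heq1, heq2] at hmono
  have hGt : G t ≤ M := hGbdd t ht (lt_of_le_of_lt (EReal.coe_le_coe_iff.2 httτ) htT)
  have hGtτ : 0 ≤ G (t + τ) := hGnn _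
  have hfin : c * (∫ s in t..t + τ, (Q₁ s + Q₂ s)) ≤ C₁ * τ + M := by linarith
  have hfin2 : (∫ s in t..t + τ, (Q₁ s + Q₂ s)) ≤ (C₁ * τ + M) / c := by
    rw [le_div_iff₀ hcpos]
    linarith [hfin]
  have hgoal : (∫ s in t..t + τ, (Q₁ s + Q₂ s)) ≤ (C₁ * τ + M) / c + 1 := by
    linarith
  exact hgoal
end

section
/- Let T ∈ (0,∞], τ ∈ (0,T) and B > 0. Suppose y : [0,T) → [0,∞) is continuous on [0,T) and differentiable on (0,T), D, h : (0,T) → [0,∞) are locally integrable, the inequality y'(t) + y(t) + D(t) ≤ h(t) holds for all t ∈ (0,T), and ∫_t^{t+τ} h(s) ds ≤ B for all t ∈ (0, T−τ). Then there exists a constant C > 0 such that y(t) ≤ C for all t ∈ (0,T) and ∫_t^{t+τ} D(s) ds ≤ C for all t ∈ (0, T−τ); in fact one may take C = max{ y(0) + B , B/τ + 2B } + B. -/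
open MeasureTheory Set Filter Topology

/-- Abstract energy lemma (displays (4.10)-(4.12) in Lemma 4.2): if `y ≥ 0` is continuous on
`[0,T)`, differentiable on `(0,T)`, `D, h ≥ 0` are locally integrable on `(0,T)`,
`y' + y + D ≤ h` on `(0,T)` and `∫_t^{t+τ} h ≤ B` on `(0,T-τ)`, then with
`C = max{y(0)+B, B/τ+2B} + B` one has `y ≤ C` on `(0,T)` and `∫_t^{t+τ} D ≤ C` on `(0,T-τ)`.
Here `T ∈ (0,∞]` is modelled as an extended real number. -/
theorem stmt_12 (T : EReal) (τ B : ℝ) (hT : 0 < T) (hτ : 0 < τ) (hτT : (τ : EReal) < T)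
    (hB : 0 < B) (y D h : ℝ → ℝ)
    (hy0 : ∀ t : ℝ, 0 ≤ t → (t : EReal) < T → 0 ≤ y t)
    (hyc : ContinuousOn y {t : ℝ | 0 ≤ t ∧ (t : EReal) < T})
    (hyd : ∀ t : ℝ, 0 < t → (t : EReal) < T → DifferentiableAt ℝ y t)
    (hD0 : ∀ t : ℝ, 0 < t → (t : EReal) < T → 0 ≤ D t)
    (hh0 : ∀ t : ℝ, 0 < t → (t : EReal) < T → 0 ≤ h t)
    (hDloc : LocallyIntegrableOn D {t : ℝ | 0 < t ∧ (t : EReal) < T})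
    (hhloc : LocallyIntegrableOn h {t : ℝ | 0 < t ∧ (t : EReal) < T})
    (hineq : ∀ t : ℝ, 0 < t → (t : EReal) < T → deriv y t + y t + D t ≤ h t)
    (hhB : ∀ t : ℝ, 0 < t → ((t + τ : ℝ) : EReal) < T → ∫ s in t..t + τ, h s ≤ B) :
    ∃ C : ℝ, 0 < C ∧ C = max (y 0 + B) (B / τ + 2 * B) + B ∧
      (∀ t : ℝ, 0 < t → (t : EReal) < T → y t ≤ C) ∧
      (∀ t : ℝ, 0 < t → ((t + τ : ℝ) : EReal) < T → ∫ s in t..t + τ, D s ≤ C) := by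
  have hy00 : 0 ≤ y 0 := hy0 0 le_rfl hT
  -- membership helpers
  have hmemS : ∀ a b x : ℝ, 0 < a → (b : EReal) < T → x ∈ Icc a b →
      0 < x ∧ (x : EReal) < T := by
    intro a b x ha hb hx
    exact ⟨ha.trans_le hx.1, lt_of_le_of_lt (EReal.coe_le_coe_iff.mpr hx.2) hb⟩
  -- integrability on compact subintervals
  have inth : ∀ a b : ℝ, 0 < a → (b : EReal) < T → IntegrableOn h (Icc a b) := by
    intro a b ha hb
    exact hhloc.integrableOn_compact_subset (fun x hx => hmemS a b x ha hb hx) isCompact_Icc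
  have intD : ∀ a b : ℝ, 0 < a → (b : EReal) < T → IntegrableOn D (Icc a b) := by
    intro a b ha hb
    exact hDloc.integrableOn_compact_subset (fun x hx => hmemS a b x ha hb hx) isCompact_Icc
  have ycont : ∀ a b : ℝ, 0 < a → (b : EReal) < T → ContinuousOn y (Icc a b) := by
    intro a b ha hb
    exact hyc.mono (fun x hx => ⟨(ha.trans_le hx.1).le, (hmemS a b x ha hb hx).2⟩)
  have inty : ∀ a b : ℝ, 0 < a → (b : EReal) < T → IntegrableOn y (Icc a b) := by
    intro a b ha hb
    exact (ycont a b ha hb).integrableOn_compact isCompact_Icc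
  -- interval integrability
  have iih : ∀ a b : ℝ, 0 < a → a ≤ b → (b : EReal) < T →
      IntervalIntegrable h volume a b := by
    intro a b ha hab hb
    rw [intervalIntegrable_iff_integrableOn_Icc_of_le hab]; exact inth a b ha hb
  have iiD : ∀ a b : ℝ, 0 < a → a ≤ b → (b : EReal) < T →
      IntervalIntegrable D volume a b := by
    intro a b ha hab hb
    rw [intervalIntegrable_iff_integrableOn_Icc_of_le hab]; exact intD a b ha hb
  have iiy : ∀ a b : ℝ, 0 < a → a ≤ b → (b : EReal) < T →
      IntervalIntegrable y volume a b := by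
    intro a b ha hab hb
    rw [intervalIntegrable_iff_integrableOn_Icc_of_le hab]; exact inty a b ha hb
  -- nonnegativity of integrals
  have inty_nonneg : ∀ a b : ℝ, 0 < a → a ≤ b → (b : EReal) < T →
      0 ≤ ∫ s in a..b, y s := by
    intro a b ha hab hb
    exact intervalIntegral.integral_nonneg hab
      (fun u hu => hy0 u (hmemS a b u ha hb hu).1.le (hmemS a b u ha hb hu).2)
  have intD_nonneg : ∀ a b : ℝ, 0 < a → a ≤ b → (b : EReal) < T →
      0 ≤ ∫ s in a..b, D s := by
    intro a b ha hab hb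
    exact intervalIntegral.integral_nonneg hab
      (fun u hu => hD0 u (hmemS a b u ha hb hu).1 (hmemS a b u ha hb hu).2)
  have inth_nonneg : ∀ a b : ℝ, 0 < a → a ≤ b → (b : EReal) < T →
      0 ≤ ∫ s in a..b, h s := by
    intro a b ha hab hb
    exact intervalIntegral.integral_nonneg hab
      (fun u hu => hh0 u (hmemS a b u ha hb hu).1 (hmemS a b u ha hb hu).2)
  -- key differential inequality integrated
  have key : ∀ a b : ℝ, 0 < a → a ≤ b → (b : EReal) < T →
      y b - y a ≤ (∫ s in a..b, h s) - (∫ s in a..b, y s) - ∫ s in a..b, D s := by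
    intro a b ha hab hb
    have hmem : ∀ x ∈ Ioo a b, 0 < x ∧ (x : EReal) < T := fun x hx =>
      hmemS a b x ha hb ⟨hx.1.le, hx.2.le⟩
    have φint : IntegrableOn (fun s => h s - y s - D s) (Icc a b) :=
      ((inth a b ha hb).sub (inty a b ha hb)).sub (intD a b ha hb)
    have hmain := intervalIntegral.sub_le_integral_of_hasDeriv_right_of_le hab
      (ycont a b ha hb)
      (fun x hx => ((hyd x (hmem x hx).1 (hmem x hx).2).hasDerivAt).hasDerivWithinAt)
      φint
      (fun x hx => by
        have h1 := hineq x (hmem x hx).1 (hmem x hx).2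
        linarith)
    rwa [intervalIntegral.integral_sub ((iih a b ha hab hb).sub (iiy a b ha hab hb))
      (iiD a b ha hab hb), intervalIntegral.integral_sub (iih a b ha hab hb)
      (iiy a b ha hab hb)] at hmain
  -- window bound for h on subwindows
  have hwin : ∀ a b : ℝ, 0 < a → a ≤ b → b ≤ a + τ → ((a + τ : ℝ) : EReal) < T →
      ∫ s in a..b, h s ≤ B := by
    intro a b ha hab hbτ hT'
    have hb : (b : EReal) < T := lt_of_le_of_lt (EReal.coe_le_coe_iff.mpr hbτ) hT'
    have hsplit := intervalIntegral.integral_add_adjacent_intervals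
      (iih a b ha hab hb) (iih b (a + τ) (ha.trans_le hab) hbτ hT')
    have h2 := inth_nonneg b (a + τ) (ha.trans_le hab) hbτ hT'
    have h3 := hhB a ha hT'
    linarith
  -- choose a0 with a0 + τ < T
  obtain ⟨r, hr1, hr2⟩ := EReal.lt_iff_exists_real_btwn.mp hτT
  have hrτ : τ < r := EReal.coe_lt_coe_iff.mp hr1
  have ha0 : 0 < r - τ := sub_pos.mpr hrτ
  have ha0T : ((r - τ + τ : ℝ) : EReal) < T := by
    have : r - τ + τ = r := by ring
    rw [this]; exact hr2
  -- base case: y t ≤ y 0 + B for 0 < t ≤ τ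
  have base : ∀ t : ℝ, 0 < t → t ≤ τ → (t : EReal) < T → y t ≤ y 0 + B := by
    intro t ht htτ htT
    have hm : 0 < min t (r - τ) := lt_min ht ha0
    have haux : ∀ a ∈ Ioo (0 : ℝ) (min t (r - τ)), y t - B ≤ y a := by
      intro a ha
      have ha1 : 0 < a := ha.1
      have hat : a < t := lt_of_lt_of_le ha.2 (min_le_left _ _)
      have haT' : ((a + τ : ℝ) : EReal) < T := by
        refine lt_of_le_of_lt (EReal.coe_le_coe_iff.mpr ?_) ha0T
        have := lt_of_lt_of_le ha.2 (min_le_right _ _)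
        linarith
      have h1 := key a t ha1 hat.le htT
      have h2 := hwin a t ha1 hat.le (by linarith) haT'
      have h3 := intD_nonneg a t ha1 hat.le htT
      have h4 := inty_nonneg a t ha1 hat.le htT
      linarith
    have heq : 𝓝[Ioo (0 : ℝ) (min t (r - τ))] 0 = 𝓝[>] (0 : ℝ) :=
      nhdsWithin_Ioo_eq_nhdsGT hm
    have hsub2 : Ioo (0 : ℝ) (min t (r - τ)) ⊆ {t : ℝ | 0 ≤ t ∧ (t : EReal) < T} := by
      intro x hx
      exact ⟨hx.1.le, lt_of_le_of_lt
        (EReal.coe_le_coe_iff.mpr (le_of_lt (lt_of_lt_of_le hx.2 (min_le_left _ _)))) htT⟩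
    have htend : Tendsto y (𝓝[>] (0 : ℝ)) (𝓝 (y 0)) := by
      rw [← heq]
      exact ((hyc 0 ⟨le_rfl, hT⟩).tendsto).mono_left (nhdsWithin_mono _ hsub2)
    have hev : ∀ᶠ a in 𝓝[>] (0 : ℝ), y t - B ≤ y a := by
      rw [← heq]; exact eventually_mem_nhdsWithin.mono haux
    have := ge_of_tendsto htend hev
    linarith
  -- step: decay over one window
  have step : ∀ t : ℝ, τ < t → (t : EReal) < T →
      y t ≤ Real.exp (-τ) * y (t - τ) + B := by
    intro t htτ htT
    have ht0 : 0 < t - τ := sub_pos.mpr htτ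
    have hab : t - τ ≤ t := by linarith
    have hmem : ∀ x ∈ Ioo (t - τ) t, 0 < x ∧ (x : EReal) < T := fun x hx =>
      hmemS (t - τ) t x ht0 htT ⟨hx.1.le, hx.2.le⟩
    have econt : ContinuousOn (fun s : ℝ => Real.exp (s - t)) (Icc (t - τ) t) :=
      (Real.continuous_exp.comp (continuous_id.sub continuous_const)).continuousOn
    have φint : IntegrableOn (fun s => Real.exp (s - t) * h s) (Icc (t - τ) t) :=
      IntegrableOn.continuousOn_mul econt (inth _ _ ht0 htT) isCompact_Icc
    have hcont : ContinuousOn (fun s => Real.exp (s - t) * y s) (Icc (t - τ) t) :=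
      econt.mul (ycont _ _ ht0 htT)
    have hderiv : ∀ x ∈ Ioo (t - τ) t, HasDerivWithinAt (fun s => Real.exp (s - t) * y s)
        (Real.exp (x - t) * y x + Real.exp (x - t) * deriv y x) (Ioi x) x := by
      intro x hx
      have h1 : HasDerivAt (fun s : ℝ => Real.exp (s - t)) (Real.exp (x - t)) x := by
        simpa [Function.comp_def] using (Real.hasDerivAt_exp (x - t)).comp x ((hasDerivAt_id x).sub_const t)
      exact (h1.mul ((hyd x (hmem x hx).1 (hmem x hx).2).hasDerivAt)).hasDerivWithinAt
    have hφg : ∀ x ∈ Ioo (t - τ) t,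
        Real.exp (x - t) * y x + Real.exp (x - t) * deriv y x ≤ Real.exp (x - t) * h x := by
      intro x hx
      have h1 := hineq x (hmem x hx).1 (hmem x hx).2
      have h2 := hD0 x (hmem x hx).1 (hmem x hx).2
      have h3 : deriv y x + y x ≤ h x := by linarith
      have h4 := mul_le_mul_of_nonneg_left h3 (Real.exp_nonneg (x - t))
      rw [mul_add] at h4
      linarith
    have hmain := intervalIntegral.sub_le_integral_of_hasDeriv_right_of_le hab hcont hderiv
      φint hφg
    have e1 : t - t = 0 := by ring
    have e2 : t - τ - t = -τ := by ring
    rw [e1, e2, Real.exp_zero, one_mul] at hmain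
    have hφii : IntervalIntegrable (fun s => Real.exp (s - t) * h s) volume (t - τ) t := by
      rw [intervalIntegrable_iff_integrableOn_Icc_of_le hab]; exact φint
    have hcmp : (∫ s in (t - τ)..t, Real.exp (s - t) * h s) ≤ ∫ s in (t - τ)..t, h s := by
      apply intervalIntegral.integral_mono_on hab hφii (iih _ _ ht0 hab htT)
      intro s hs
      have hs1 := hh0 s (hmemS _ _ s ht0 htT hs).1 (hmemS _ _ s ht0 htT hs).2
      have hs2 : Real.exp (s - t) ≤ 1 := by
        rw [← Real.exp_zero]
        exact Real.exp_le_exp.mpr (by linarith [hs.2])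
      exact mul_le_of_le_one_left hs1 hs2
    have hB' : (∫ s in (t - τ)..t, h s) ≤ B := by
      have h5 := hhB (t - τ) ht0 (by rw [show t - τ + τ = t from by ring]; exact htT)
      rwa [show t - τ + τ = t from by ring] at h5
    linarith
  -- induction
  set M := max (y 0 + B) (B / (1 - Real.exp (-τ))) with hMdef
  have hden : 0 < 1 - Real.exp (-τ) := by
    have : Real.exp (-τ) < 1 := Real.exp_lt_one_iff.mpr (neg_lt_zero.mpr hτ)
    linarith
  have hMB : B ≤ (1 - Real.exp (-τ)) * M := by
    have h1 : B / (1 - Real.exp (-τ)) ≤ M := le_max_right _ _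
    have h2 := mul_le_mul_of_nonneg_left h1 hden.le
    rwa [mul_div_cancel₀ _ hden.ne'] at h2
  have hind : ∀ n : ℕ, ∀ t : ℝ, 0 < t → t ≤ (n + 1 : ℕ) * τ → (t : EReal) < T → y t ≤ M := by
    intro n
    induction n with
    | zero =>
      intro t ht h1 h2
      have h1' : t ≤ τ := by simpa using h1
      exact le_trans (base t ht h1' h2) (le_max_left _ _)
    | succ k ih =>
      intro t ht h1 h2
      by_cases hc : t ≤ τ
      · exact le_trans (base t ht hc h2) (le_max_left _ _)
      · push_neg at hc
        have ht' : 0 < t - τ := sub_pos.mpr hc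
        have h1' : t - τ ≤ (k + 1 : ℕ) * τ := by push_cast at h1 ⊢; linarith
        have h2' : ((t - τ : ℝ) : EReal) < T :=
          lt_of_le_of_lt (EReal.coe_le_coe_iff.mpr (by linarith)) h2
        have hs := step t hc h2
        have hyM := ih (t - τ) ht' h1' h2'
        have h4 := mul_le_mul_of_nonneg_left hyM (Real.exp_nonneg (-τ))
        nlinarith [hMB]
  have hyM : ∀ t : ℝ, 0 < t → (t : EReal) < T → y t ≤ M := by
    intro t ht htT
    obtain ⟨n, hn⟩ := exists_nat_gt (t / τ)
    have hn' : t < n * τ := by rwa [div_lt_iff₀ hτ] at hn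
    refine hind n t ht ?_ htT
    push_cast
    nlinarith
  -- bound M by the required constant
  have hM2 : M ≤ max (y 0 + B) (B / τ + 2 * B) := by
    apply max_le (le_max_left _ _)
    refine le_trans ?_ (le_max_right _ _)
    rw [div_le_iff₀ hden]
    have he : Real.exp (-τ) * (1 + τ) ≤ 1 := by
      have h1 : τ + 1 ≤ Real.exp τ := Real.add_one_le_exp τ
      have h2 : Real.exp (-τ) * Real.exp τ = 1 := by
        rw [← Real.exp_add]; simp
      nlinarith [Real.exp_pos (-τ)]
    have hq : B / τ * τ = B := div_mul_cancel₀ B hτ.ne'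
    nlinarith [Real.exp_pos (-τ), mul_pos hB hτ, div_pos hB hτ]
  refine ⟨max (y 0 + B) (B / τ + 2 * B) + B, ?_, rfl, ?_, ?_⟩
  · have h1 : y 0 + B ≤ max (y 0 + B) (B / τ + 2 * B) := le_max_left _ _
    linarith
  · intro t ht htT
    have h1 := hyM t ht htT
    linarith [hM2]
  · intro t ht htT'
    have htT : (t : EReal) < T :=
      lt_of_le_of_lt (EReal.coe_le_coe_iff.mpr (by linarith)) htT'
    have hk := key t (t + τ) ht (by linarith) htT'
    have h1 := hhB t ht htT'
    have h2 := inty_nonneg t (t + τ) ht (by linarith) htT'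
    have h3 := hy0 (t + τ) (by positivity) htT'
    have h4 := hyM t ht htT
    linarith [hM2]
end
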